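/- Zero-chain property for max-of-affine functions with orthogonal late gradients: let f(x) = max_{i∈I}{f_i + ⟨g_i, x - x_i⟩} where for all i ≥ n the value f_i + ⟨g_i, x - x_i⟩ equals the constant c on the affine subspace x_0 + span{g_0,…,g_{j-1}} for j with n ≤ j ≤ i (due to g_i ⊥ span{g_0,…,g_{i-1}} and x_i - x_0 ∈ span of earlier gradients). Then for any x ∈ x_0 + span{g_0,…,g_{j-1}} with n ≤ j ≤ N-1, there exists an active index k ≤ j, i.e., g_k ∈ ∂f(x) for some k ≤ j. -/

import Mathlib

open RealInnerProductSpace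

/-- zero-chain property for max-of-affine functions with orthogonal late
gradients: if every affine piece with index `i ≥ n` takes the constant value `c` on the
affine subspace `x₀ + span{g₀,…,g_{i-1}}`, the star piece has value `f⋆ ≤ c`, and
`x ∈ x₀ + span{g₀,…,g_{j-1}}` with `n ≤ j ≤ N-1`, then some piece with index `k ≤ j`
is active at `x`, so `g_k ∈ ∂f(x)`. -/
theorem klm_zero_chain {d n N j : ℕ} (hnj : n ≤ j) (hjN : j < N) (c fs : ℝ)
    (x0 : EuclideanSpace ℝ (Fin d))
    (xv g : Fin (N + 1) → EuclideanSpace ℝ (Fin d)) (fv : Fin (N + 1) → ℝ)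
    (F : EuclideanSpace ℝ (Fin d) → ℝ)
    (hF : ∀ z, F z = max
      (Finset.univ.sup' Finset.univ_nonempty
        (fun i : Fin (N + 1) => fv i + ⟪g i, z - xv i⟫)) fs)
    (x : EuclideanSpace ℝ (Fin d))
    (hx : x - x0 ∈ Submodule.span ℝ (g '' {l : Fin (N + 1) | (l : ℕ) < j}))
    (hconst : ∀ i : Fin (N + 1), n ≤ (i : ℕ) → ∀ z : EuclideanSpace ℝ (Fin d),
      z - x0 ∈ Submodule.span ℝ (g '' {l : Fin (N + 1) | (l : ℕ) < (i : ℕ)}) →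
      fv i + ⟪g i, z - xv i⟫ = c)
    (hstar : fs ≤ c) :
    ∃ k : Fin (N + 1), (k : ℕ) ≤ j ∧ ∀ z, F x + ⟪g k, z - x⟫ ≤ F z := by
  classical
  set p : Fin (N + 1) → ℝ := fun i => fv i + ⟪g i, x - xv i⟫ with hp
  have hjlt : j < N + 1 := Nat.lt_succ_of_lt hjN
  set jF : Fin (N + 1) := ⟨j, hjlt⟩ with hjF
  set S : Finset (Fin (N + 1)) := Finset.univ.filter (fun i => (i : ℕ) ≤ j) with hS
  have hjS : jF ∈ S := by simp [hS, hjF]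
  obtain ⟨k, hkS, hkmax⟩ := S.exists_max_image p ⟨jF, hjS⟩
  have hkj : (k : ℕ) ≤ j := by simpa [hS] using hkS
  -- piece jF has value c at x
  have hjc : p jF = c := hconst jF (by simpa [hjF] using hnj) x (by simpa [hjF] using hx)
  have hck : c ≤ p k := hjc ▸ hkmax jF hjS
  -- every piece with index > j has value c at x
  have hgt : ∀ i : Fin (N + 1), j < (i : ℕ) → p i = c := by
    intro i hi
    refine hconst i (hnj.trans hi.le) x ?_
    refine Submodule.span_mono ?_ hx
    exact Set.image_mono (fun l hl => lt_trans hl hi)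
  have hall : ∀ i : Fin (N + 1), p i ≤ p k := by
    intro i
    rcases le_or_gt (i : ℕ) j with h | h
    · exact hkmax i (by simp [hS, h])
    · rw [hgt i h]; exact hck
  have hsup : (Finset.univ.sup' Finset.univ_nonempty p) = p k := by
    apply le_antisymm
    · exact Finset.sup'_le _ _ fun i _ => hall i
    · exact Finset.le_sup' p (Finset.mem_univ k)
  have hFx : F x = p k := by
    rw [hF x]
    have : fs ≤ p k := hstar.trans hck
    simp only [hp]
    rw [show (Finset.univ.sup' Finset.univ_nonempty
        (fun i : Fin (N + 1) => fv i + ⟪g i, x - xv i⟫)) = p k from hsup]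
    exact max_eq_left this
  refine ⟨k, hkj, fun z => ?_⟩
  have key : F x + ⟪g k, z - x⟫ = fv k + ⟪g k, z - xv k⟫ := by
    rw [hFx, hp]
    have : (x - xv k) + (z - x) = z - xv k := by abel
    rw [← this, inner_add_right]
    ring
  rw [key, hF z]
  exact le_max_of_le_left (Finset.le_sup' (fun i : Fin (N + 1) => fv i + ⟪g i, z - xv i⟫) (Finset.mem_univ k))
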